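/- Let (T*, X) be random elements with T* taking values in a finite set 𝐓* and law Q̄, and let {C_i}_{i=1}^r be subsets of 𝐓*. Suppose there exists ε > 0 such that Q̄(T* = t* | X) ≥ ε almost surely for every t* ∈ 𝐓* with Q̄(T* = t*) > 0. Define A : ⊕_{i=1}^r L¹(P_X) → L¹(Q̄_{T*X}) by A(f)(t*, x) = Σ_{i=1}^r 1{t* ∈ C_i} f_i(x), where P_X is the law of X. Then the range of A is a closed subspace of L¹(Q̄_{T*X}). -/

import Mathlib

open MeasureTheory Filter
open scoped Classical BigOperators

lemma key_ineq' {Ω 𝒳 : Type*} [MeasurableSpace Ω] [MeasurableSpace 𝒳]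
    (Q : Measure Ω) [IsProbabilityMeasure Q] (X : Ω → 𝒳) (hX : Measurable X)
    (Y : Ω → ℝ) (hYm : Measurable Y) (hY1 : ∀ ω, ‖Y ω‖ ≤ 1)
    (ε : ℝ)
    (hcond : ∀ᵐ ω ∂Q, ε ≤ (Q[Y | MeasurableSpace.comap X inferInstance]) ω)
    (φ : 𝒳 → ℝ) (hφm : Measurable φ) (hφi : Integrable φ (Q.map X)) :
    ε * ∫ x, |φ x| ∂(Q.map X) ≤ ∫ ω, Y ω * |φ (X ω)| ∂Q := by
  have hm : MeasurableSpace.comap X inferInstance ≤ ‹MeasurableSpace Ω› := hX.comap_le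
  haveI : SigmaFinite (Q.trim hm) := inferInstance
  set Z : Ω → ℝ := fun ω => |φ (X ω)| with hZdef
  have hXm : Measurable[MeasurableSpace.comap X inferInstance] X :=
    Measurable.of_comap_le le_rfl
  have hZm : StronglyMeasurable[MeasurableSpace.comap X inferInstance] Z :=
    ((hφm.abs).comp hXm).stronglyMeasurable
  have hZi : Integrable Z Q :=
    (integrable_map_measure hφi.abs.1 hX.aemeasurable).mp hφi.abs
  have hYi : Integrable Y Q :=
    (integrable_const (1:ℝ)).mono' hYm.aestronglyMeasurable (Filter.Eventually.of_forall hY1)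
  have hZYi : Integrable (Z * Y) Q := by
    refine hZi.mono' (hZi.1.mul hYm.aestronglyMeasurable) ?_
    refine Filter.Eventually.of_forall fun ω => ?_
    simp only [Pi.mul_apply, norm_mul]
    calc ‖Z ω‖ * ‖Y ω‖ ≤ ‖Z ω‖ * 1 :=
          mul_le_mul_of_nonneg_left (hY1 ω) (norm_nonneg _)
      _ = Z ω := by simp [hZdef, abs_abs]
  have hpull : Q[Z * Y | MeasurableSpace.comap X inferInstance] =ᵐ[Q]
      Z * Q[Y | MeasurableSpace.comap X inferInstance] :=
    condExp_mul_of_stronglyMeasurable_left hZm hZYi hYi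
  have hint1 : Integrable (Z * Q[Y | MeasurableSpace.comap X inferInstance]) Q :=
    (integrable_condExp).congr hpull
  have h1 : ∫ x, |φ x| ∂(Q.map X) = ∫ ω, Z ω ∂Q :=
    integral_map hX.aemeasurable (hφm.abs).aestronglyMeasurable
  calc ε * ∫ x, |φ x| ∂(Q.map X) = ∫ ω, ε * Z ω ∂Q := by
        rw [h1, integral_const_mul]
    _ ≤ ∫ ω, (Z * Q[Y | MeasurableSpace.comap X inferInstance]) ω ∂Q := by
        refine integral_mono_ae (hZi.const_mul ε) hint1 ?_
        filter_upwards [hcond] with ω hω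
        have hZ0 : 0 ≤ Z ω := abs_nonneg _
        calc ε * Z ω ≤ (Q[Y | MeasurableSpace.comap X inferInstance]) ω * Z ω :=
              mul_le_mul_of_nonneg_right hω hZ0
          _ = (Z * Q[Y | MeasurableSpace.comap X inferInstance]) ω := mul_comm _ _
    _ = ∫ ω, (Q[Z * Y | MeasurableSpace.comap X inferInstance]) ω ∂Q :=
        integral_congr_ae hpull.symm
    _ = ∫ ω, (Z * Y) ω ∂Q := integral_condExp hm
    _ = ∫ ω, Y ω * |φ (X ω)| ∂Q := by
        refine integral_congr_ae (Filter.Eventually.of_forall fun ω => ?_)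
        simp [hZdef, mul_comm]

lemma exists_pseudo_inverse {K V W : Type*} [Field K] [AddCommGroup V] [Module K V]
    [AddCommGroup W] [Module K W] (M : V →ₗ[K] W) :
    ∃ B : W →ₗ[K] V, ∀ v, M (B (M v)) = M v := by
  obtain ⟨π, hπ⟩ := (LinearMap.range M).subtype.exists_leftInverse_of_injective
    (Submodule.ker_subtype _)
  obtain ⟨σ, hσ⟩ := M.rangeRestrict.exists_rightInverse_of_surjective
    (LinearMap.range_rangeRestrict M)
  refine ⟨σ.comp π, fun v => ?_⟩
  have h1 : ∀ u : LinearMap.range M, M (σ u) = (u : W) := fun u => by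
    simpa using congrArg Subtype.val (LinearMap.congr_fun hσ u)
  have h2 : π (M v) = ⟨M v, LinearMap.mem_range_self M v⟩ := by
    simpa using LinearMap.congr_fun hπ ⟨M v, LinearMap.mem_range_self M v⟩
  simp [LinearMap.comp_apply, h2, h1]

lemma exists_L1_limit {𝒳 : Type*} [MeasurableSpace 𝒳] (ν : Measure 𝒳)
    (u : ℕ → 𝒳 → ℝ) (hui : ∀ n, Integrable (u n) ν)
    (a : ℕ → ℝ) (ha : Tendsto a atTop (nhds 0))
    (hcauchy : ∀ n m, ∫ x, |u n x - u m x| ∂ν ≤ a n + a m) :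
    ∃ f : 𝒳 → ℝ, Measurable f ∧ Integrable f ν ∧
      Tendsto (fun n => ∫ x, |u n x - f x| ∂ν) atTop (nhds 0) := by
  have hmem : ∀ n, MemLp (u n) 1 ν := fun n => memLp_one_iff_integrable.mpr (hui n)
  set Φ : ℕ → Lp ℝ 1 ν := fun n => (hmem n).toLp (u n) with hΦdef
  have hdist : ∀ n m, dist (Φ n) (Φ m) = ∫ x, |u n x - u m x| ∂ν := by
    intro n m
    rw [dist_eq_norm, ← MemLp.toLp_sub, L1.norm_eq_integral_norm]
    refine integral_congr_ae ?_
    filter_upwards [MemLp.coeFn_toLp ((hmem n).sub (hmem m))] with x hx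
    rw [hx]; simp [Real.norm_eq_abs]
  have hC : CauchySeq Φ := by
    rw [Metric.cauchySeq_iff]
    intro δ hδ
    have := (Metric.tendsto_nhds.mp ha) (δ/2) (by linarith)
    rw [eventually_atTop] at this
    obtain ⟨N, hN⟩ := this
    refine ⟨N, fun m hm n hn => ?_⟩
    have h1 : a m < δ/2 := lt_of_le_of_lt (le_abs_self _) (by simpa using hN m hm)
    have h2 : a n < δ/2 := lt_of_le_of_lt (le_abs_self _) (by simpa using hN n hn)
    calc dist (Φ m) (Φ n) = ∫ x, |u m x - u n x| ∂ν := hdist m n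
      _ ≤ a m + a n := hcauchy m n
      _ < δ := by linarith
  obtain ⟨L, hL⟩ := cauchySeq_tendsto_of_complete hC
  refine ⟨L, (Lp.stronglyMeasurable L).measurable, L1.integrable_coeFn L, ?_⟩
  have hdist2 : ∀ n, dist (Φ n) L = ∫ x, |u n x - L x| ∂ν := by
    intro n
    rw [dist_eq_norm, L1.norm_eq_integral_norm]
    refine integral_congr_ae ?_
    filter_upwards [Lp.coeFn_sub (Φ n) L, MemLp.coeFn_toLp (hmem n)] with x hx hx2
    rw [hx]; simp [Real.norm_eq_abs, hΦdef, hx2]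
  have := tendsto_iff_dist_tendsto_zero.mp hL
  refine this.congr fun n => hdist2 n

theorem stmt10 {Ω 𝒳 𝓣 : Type*} [MeasurableSpace Ω] [MeasurableSpace 𝒳]
    [Fintype 𝓣] [MeasurableSpace 𝓣] [MeasurableSingletonClass 𝓣] {r : ℕ}
    (Q : Measure Ω) [IsProbabilityMeasure Q]
    (Tstar : Ω → 𝓣) (X : Ω → 𝒳) (hT : Measurable Tstar) (hX : Measurable X)
    (C : Fin r → Set 𝓣)
    (ε : ℝ) (hε : 0 < ε)
    (hcond : ∀ t : 𝓣, 0 < Q {ω | Tstar ω = t} →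
      ∀ᵐ ω ∂Q, ε ≤ (Q[fun ω' => (if Tstar ω' = t then (1:ℝ) else 0) |
        MeasurableSpace.comap X inferInstance]) ω)
    (g : Ω → ℝ) (hg : Integrable g Q)
    (F : ℕ → Fin r → 𝒳 → ℝ)
    (hFm : ∀ n i, Measurable (F n i))
    (hFi : ∀ n i, Integrable (F n i) (Measure.map X Q))
    (hconv : Tendsto
      (fun n => ∫ ω, |g ω - ∑ i, (if Tstar ω ∈ C i then (1:ℝ) else 0) * F n i (X ω)| ∂Q)
      atTop (nhds 0)) :
    ∃ f : Fin r → 𝒳 → ℝ, (∀ i, Measurable (f i)) ∧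
      (∀ i, Integrable (f i) (Measure.map X Q)) ∧
      g =ᵐ[Q] fun ω => ∑ i, (if Tstar ω ∈ C i then (1:ℝ) else 0) * f i (X ω) := by
  classical
  set ν : Measure 𝒳 := Q.map X with hνdef
  set a : ℕ → ℝ := fun n =>
    ∫ ω, |g ω - ∑ i, (if Tstar ω ∈ C i then (1:ℝ) else 0) * F n i (X ω)| ∂Q with hadef
  have ha0 : ∀ n, 0 ≤ a n := fun n => integral_nonneg fun ω => abs_nonneg _
  -- basic measurability/integrability facts
  have hCmeas : ∀ i, MeasurableSet (C i) := fun i => (Set.toFinite (C i)).measurableSet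
  have hIndm : ∀ i, Measurable (fun ω => if Tstar ω ∈ C i then (1:ℝ) else 0) := by
    intro i
    exact Measurable.ite (hT (hCmeas i)) measurable_const measurable_const
  have hIndb : ∀ (P : Prop) [Decidable P], ‖if P then (1:ℝ) else 0‖ ≤ 1 := by
    intro P _; split_ifs <;> simp
  have hFiQ : ∀ n i, Integrable (fun ω => F n i (X ω)) Q := fun n i =>
    (integrable_map_measure (hFi n i).1 hX.aemeasurable).mp (hFi n i)
  have hAint : ∀ n, Integrable
      (fun ω => ∑ i, (if Tstar ω ∈ C i then (1:ℝ) else 0) * F n i (X ω)) Q := by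
    intro n
    exact integrable_finset_sum _ fun i _ =>
      (hFiQ n i).bdd_mul (hIndm i).aestronglyMeasurable (c := 1) (Filter.Eventually.of_forall fun ω => hIndb _)
  -- the positive-probability types
  set S : Finset 𝓣 := Finset.univ.filter (fun t => 0 < Q {ω | Tstar ω = t}) with hSdef
  -- per-type sums
  set hn : ℕ → 𝓣 → 𝒳 → ℝ :=
    fun n t x => ∑ i, (if t ∈ C i then (1:ℝ) else 0) * F n i x with hndef
  have hhnm : ∀ n t, Measurable (hn n t) := fun n t =>
    Finset.measurable_sum _ fun i _ => (hFm n i).const_mul _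
  have hhni : ∀ n t, Integrable (hn n t) ν := fun n t =>
    integrable_finset_sum _ fun i _ => ((hFi n i).const_mul _)
  -- Cauchy estimate per positive type
  have hcau : ∀ t ∈ S, ∀ n m : ℕ,
      ∫ x, |hn n t x - hn m t x| ∂ν ≤ (a n + a m) / ε := by
    intro t ht n m
    rw [le_div_iff₀ hε]
    have hpos : 0 < Q {ω | Tstar ω = t} := (Finset.mem_filter.mp ht).2
    have hYm : Measurable (fun ω => if Tstar ω = t then (1:ℝ) else 0) :=
      Measurable.ite (hT (measurableSet_singleton t)) measurable_const measurable_const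
    have hφm : Measurable (fun x => hn n t x - hn m t x) := (hhnm n t).sub (hhnm m t)
    have hφi : Integrable (fun x => hn n t x - hn m t x) ν := (hhni n t).sub (hhni m t)
    have key := key_ineq' Q X hX _ hYm (fun ω => hIndb _) ε (hcond t hpos)
      (fun x => hn n t x - hn m t x) hφm hφi
    have hφXi : Integrable (fun ω => |hn n t (X ω) - hn m t (X ω)|) Q :=
      (integrable_map_measure hφi.abs.1 hX.aemeasurable).mp hφi.abs
    have step2 : ∫ ω, (if Tstar ω = t then (1:ℝ) else 0) * |hn n t (X ω) - hn m t (X ω)| ∂Q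
        ≤ ∫ ω, |(∑ i, (if Tstar ω ∈ C i then (1:ℝ) else 0) * F n i (X ω)) -
            (∑ i, (if Tstar ω ∈ C i then (1:ℝ) else 0) * F m i (X ω))| ∂Q := by
      refine integral_mono
        (hφXi.bdd_mul hYm.aestronglyMeasurable (c := 1) (Filter.Eventually.of_forall fun ω => hIndb _))
        (((hAint n).sub (hAint m)).abs) (fun ω => ?_)
      by_cases h : Tstar ω = t
      · subst h
        rw [if_pos rfl, one_mul]
      · rw [if_neg h, zero_mul]
        exact abs_nonneg _
    have step3 : ∫ ω, |(∑ i, (if Tstar ω ∈ C i then (1:ℝ) else 0) * F n i (X ω)) -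
            (∑ i, (if Tstar ω ∈ C i then (1:ℝ) else 0) * F m i (X ω))| ∂Q
        ≤ a n + a m := by
      have h1 : ∫ ω, (|g ω - ∑ i, (if Tstar ω ∈ C i then (1:ℝ) else 0) * F n i (X ω)|
          + |g ω - ∑ i, (if Tstar ω ∈ C i then (1:ℝ) else 0) * F m i (X ω)|) ∂Q
          = a n + a m :=
        integral_add (hg.sub (hAint n)).abs (hg.sub (hAint m)).abs
      rw [← h1]
      refine integral_mono (((hAint n).sub (hAint m)).abs)
        ((hg.sub (hAint n)).abs.add (hg.sub (hAint m)).abs) (fun ω => ?_)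
      have h2 := abs_sub_le (∑ i, (if Tstar ω ∈ C i then (1:ℝ) else 0) * F n i (X ω)) (g ω)
        (∑ i, (if Tstar ω ∈ C i then (1:ℝ) else 0) * F m i (X ω))
      have h3 : |(∑ i, (if Tstar ω ∈ C i then (1:ℝ) else 0) * F n i (X ω)) - g ω|
          = |g ω - ∑ i, (if Tstar ω ∈ C i then (1:ℝ) else 0) * F n i (X ω)| :=
        abs_sub_comm _ _
      rw [h3] at h2
      exact h2
    have := key.trans (step2.trans step3)
    linarith
  -- the linear map M and its pseudo-inverse B
  obtain ⟨M, hM⟩ : ∃ M : (Fin r → ℝ) →ₗ[ℝ] ((↥S) → ℝ),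
      ∀ c t, M c t = ∑ i, (if (t:𝓣) ∈ C i then (1:ℝ) else 0) * c i := by
    refine ⟨{ toFun := fun c t => ∑ i, (if (t:𝓣) ∈ C i then (1:ℝ) else 0) * c i
              map_add' := ?_, map_smul' := ?_ }, fun c t => rfl⟩
    · intro c d; funext t; simp [mul_add, Finset.sum_add_distrib]
    · intro s c; funext t
      simp only [smul_eq_mul, Pi.smul_apply, RingHom.id_apply]
      rw [Finset.mul_sum]; exact Finset.sum_congr rfl fun i _ => by ring
  obtain ⟨B, hB⟩ := exists_pseudo_inverse M
  set β : Fin r → (↥S) → ℝ :=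
    fun i t => B (fun j => if t = j then (1:ℝ) else 0) i with hβdef
  have hBexp : ∀ (v : (↥S) → ℝ) i, B v i = ∑ t, v t * β i t := by
    intro v i
    conv_lhs => rw [pi_eq_sum_univ v, map_sum, Finset.sum_apply]
    exact Finset.sum_congr rfl fun t _ => by rw [B.map_smul]; simp [hβdef]
  -- the corrected functions F'
  set F' : ℕ → Fin r → 𝒳 → ℝ :=
    fun n i x => ∑ t : ↥S, β i t * hn n (t:𝓣) x with hF'def
  have hF'm : ∀ n i, Measurable (F' n i) := fun n i =>
    Finset.measurable_sum _ fun t _ => (hhnm n t).const_mul _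
  have hF'i : ∀ n i, Integrable (F' n i) ν := fun n i =>
    integrable_finset_sum _ fun t _ => ((hhni n t).const_mul _)
  -- F' agrees with B ∘ M ∘ F and hence M (F' · x) = M (F · x)
  have hMF' : ∀ n x (t : ↥S),
      (∑ i, (if (t:𝓣) ∈ C i then (1:ℝ) else 0) * F' n i x) = hn n (t:𝓣) x := by
    intro n x t
    have h1 : (fun i => F' n i x) = B (fun t : ↥S => hn n (t:𝓣) x) := by
      funext i
      rw [hBexp]
      exact Finset.sum_congr rfl fun t _ => mul_comm _ _
    have h2 : (fun t : ↥S => hn n (t:𝓣) x) = M (fun i => F n i x) := by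
      funext t; rw [hM]
    have h3 : M (fun i => F' n i x) = M (fun i => F n i x) := by
      rw [h1, h2, hB]
    have h4 := congrFun h3 t
    rw [hM, hM] at h4
    rw [h4]
  -- Cauchy estimate for F'
  set ci : Fin r → ℝ := fun i => ∑ t : ↥S, |β i t| with hcidef
  have hci0 : ∀ i, 0 ≤ ci i := fun i => Finset.sum_nonneg fun t _ => abs_nonneg _
  have hF'cau : ∀ i n m, ∫ x, |F' n i x - F' m i x| ∂ν ≤
      ((ci i + 1)/ε) * a n + ((ci i + 1)/ε) * a m := by
    intro i n m
    have hptw : ∀ x, |F' n i x - F' m i x|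
        ≤ ∑ t : ↥S, |β i t| * |hn n (t:𝓣) x - hn m (t:𝓣) x| := by
      intro x
      have he : F' n i x - F' m i x
          = ∑ t : ↥S, β i t * (hn n (t:𝓣) x - hn m (t:𝓣) x) := by
        simp [hF'def, mul_sub, Finset.sum_sub_distrib]
      rw [he]
      refine (Finset.abs_sum_le_sum_abs _ _).trans ?_
      refine Finset.sum_le_sum fun t _ => ?_
      rw [abs_mul]
    have hint : Integrable (fun x => ∑ t : ↥S, |β i t| * |hn n (t:𝓣) x - hn m (t:𝓣) x|) ν :=
      integrable_finset_sum _ fun t _ => (((hhni n t).sub (hhni m t)).abs.const_mul _)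
    have h0 : 0 ≤ a n + a m := add_nonneg (ha0 n) (ha0 m)
    calc ∫ x, |F' n i x - F' m i x| ∂ν
        ≤ ∫ x, ∑ t : ↥S, |β i t| * |hn n (t:𝓣) x - hn m (t:𝓣) x| ∂ν :=
          integral_mono (((hF'i n i).sub (hF'i m i)).abs) hint hptw
      _ = ∑ t : ↥S, |β i t| * ∫ x, |hn n (t:𝓣) x - hn m (t:𝓣) x| ∂ν := by
          have hI2 : ∀ t : ↥S, Integrable
              (fun x => |β i t| * |hn n (↑t:𝓣) x - hn m (↑t:𝓣) x|) ν :=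
            fun t => (((hhni n ↑t).sub (hhni m ↑t)).abs.const_mul _)
          rw [integral_finset_sum _ (fun t _ => hI2 t)]
          exact Finset.sum_congr rfl fun t _ => integral_const_mul _ _
      _ ≤ ∑ t : ↥S, |β i t| * ((a n + a m)/ε) :=
          Finset.sum_le_sum fun t _ =>
            mul_le_mul_of_nonneg_left (hcau (t:𝓣) t.2 n m) (abs_nonneg _)
      _ = ci i * ((a n + a m)/ε) := by rw [← Finset.sum_mul]
      _ ≤ ((ci i + 1)/ε) * a n + ((ci i + 1)/ε) * a m := by
          have e1 : ci i * ((a n + a m)/ε) = (ci i/ε) * (a n + a m) := by ring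
          have e2 : ((ci i + 1)/ε) * a n + ((ci i + 1)/ε) * a m
              = ((ci i + 1)/ε) * (a n + a m) := by ring
          rw [e1, e2]
          refine mul_le_mul_of_nonneg_right ?_ h0
          exact (div_le_div_iff_of_pos_right hε).mpr (by linarith)
  -- L¹ limits f i
  have hlim : ∀ i, ∃ f : 𝒳 → ℝ, Measurable f ∧ Integrable f ν ∧
      Tendsto (fun n => ∫ x, |F' n i x - f x| ∂ν) atTop (nhds 0) := by
    intro i
    refine exists_L1_limit ν (fun n => F' n i) (hF'i · i)
      (fun n => ((ci i + 1)/ε) * a n) ?_ (hF'cau i)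
    have := hconv.const_mul ((ci i + 1)/ε)
    rw [mul_zero] at this
    exact this
  choose f hfm hfi hft using hlim
  refine ⟨f, hfm, hfi, ?_⟩
  -- integrability of the compositions with X
  have hF'iQ : ∀ n i, Integrable (fun ω => F' n i (X ω)) Q := fun n i =>
    (integrable_map_measure (hF'i n i).1 hX.aemeasurable).mp (hF'i n i)
  have hfiQ : ∀ i, Integrable (fun ω => f i (X ω)) Q := fun i =>
    (integrable_map_measure (hfi i).1 hX.aemeasurable).mp (hfi i)
  have hAfint : Integrable
      (fun ω => ∑ i, (if Tstar ω ∈ C i then (1:ℝ) else 0) * f i (X ω)) Q :=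
    integrable_finset_sum _ fun i _ =>
      (hfiQ i).bdd_mul (hIndm i).aestronglyMeasurable (c := 1) (Filter.Eventually.of_forall fun ω => hIndb _)
  have hAF'int : ∀ n, Integrable
      (fun ω => ∑ i, (if Tstar ω ∈ C i then (1:ℝ) else 0) * F' n i (X ω)) Q := fun n =>
    integrable_finset_sum _ fun i _ =>
      (hF'iQ n i).bdd_mul (hIndm i).aestronglyMeasurable (c := 1) (Filter.Eventually.of_forall fun ω => hIndb _)
  -- a.e. every type is in S
  have hNnull : Q {ω | Tstar ω ∉ (S : Set 𝓣)} = 0 := by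
    have hsub : {ω | Tstar ω ∉ (S : Set 𝓣)} ⊆
        ⋃ t ∈ (Sᶜ : Finset 𝓣), {ω | Tstar ω = t} := by
      intro ω hω
      simp only [Set.mem_iUnion]
      exact ⟨Tstar ω, by simpa using hω, rfl⟩
    refine le_antisymm ?_ (by simp)
    refine le_trans (measure_mono hsub) ?_
    refine le_trans (measure_biUnion_finset_le _ _) ?_
    refine le_of_eq (Finset.sum_eq_zero fun t ht => ?_)
    have h1 : ¬ 0 < Q {ω | Tstar ω = t} := by
      intro hlt
      have : t ∈ S := by simp [hSdef, hlt]
      exact (Finset.mem_compl.mp ht) this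
    simpa using not_lt.mp h1
  have hae : ∀ᵐ ω ∂Q, Tstar ω ∈ S := by
    rw [ae_iff]
    exact hNnull
  -- on positive types, A F' = A F
  have hAF'eq : ∀ n, (fun ω => ∑ i, (if Tstar ω ∈ C i then (1:ℝ) else 0) * F n i (X ω))
      =ᵐ[Q] (fun ω => ∑ i, (if Tstar ω ∈ C i then (1:ℝ) else 0) * F' n i (X ω)) := by
    intro n
    filter_upwards [hae] with ω hω
    have h1 := hMF' n (X ω) ⟨Tstar ω, hω⟩
    simp only [hndef] at h1
    exact h1.symm
  -- the tail bound
  set b : ℕ → ℝ := fun n => ∑ i, ∫ x, |F' n i x - f i x| ∂ν with hbdef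
  have hb : Tendsto b atTop (nhds 0) := by
    have := tendsto_finset_sum (Finset.univ : Finset (Fin r)) (fun i _ => hft i)
    simpa using this
  have hmain : ∀ n, ∫ ω, |g ω - ∑ i, (if Tstar ω ∈ C i then (1:ℝ) else 0) * f i (X ω)| ∂Q
      ≤ a n + b n := by
    intro n
    have h2 : ∫ ω, |g ω - ∑ i, (if Tstar ω ∈ C i then (1:ℝ) else 0) * F' n i (X ω)| ∂Q
        = a n := by
      refine (integral_congr_ae ?_).symm
      filter_upwards [hAF'eq n] with ω h
      rw [h]
    have h3 : ∫ ω, |(∑ i, (if Tstar ω ∈ C i then (1:ℝ) else 0) * F' n i (X ω)) -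
        (∑ i, (if Tstar ω ∈ C i then (1:ℝ) else 0) * f i (X ω))| ∂Q ≤ b n := by
      have hptw : ∀ ω, |(∑ i, (if Tstar ω ∈ C i then (1:ℝ) else 0) * F' n i (X ω)) -
          (∑ i, (if Tstar ω ∈ C i then (1:ℝ) else 0) * f i (X ω))|
          ≤ ∑ i, |F' n i (X ω) - f i (X ω)| := by
        intro ω
        have he : (∑ i, (if Tstar ω ∈ C i then (1:ℝ) else 0) * F' n i (X ω)) -
            (∑ i, (if Tstar ω ∈ C i then (1:ℝ) else 0) * f i (X ω))
            = ∑ i, (if Tstar ω ∈ C i then (1:ℝ) else 0) * (F' n i (X ω) - f i (X ω)) := by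
          rw [← Finset.sum_sub_distrib]
          exact Finset.sum_congr rfl fun i _ => (mul_sub _ _ _).symm
        rw [he]
        refine (Finset.abs_sum_le_sum_abs _ _).trans ?_
        refine Finset.sum_le_sum fun i _ => ?_
        rw [abs_mul]
        calc |if Tstar ω ∈ C i then (1:ℝ) else 0| * |F' n i (X ω) - f i (X ω)|
            ≤ 1 * |F' n i (X ω) - f i (X ω)| :=
              mul_le_mul_of_nonneg_right (by simpa using hIndb (Tstar ω ∈ C i)) (abs_nonneg _)
          _ = |F' n i (X ω) - f i (X ω)| := one_mul _
      have hI3 : ∀ i : Fin r, Integrable (fun ω => |F' n i (X ω) - f i (X ω)|) Q :=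
        fun i => ((hF'iQ n i).sub (hfiQ i)).abs
      calc ∫ ω, |(∑ i, (if Tstar ω ∈ C i then (1:ℝ) else 0) * F' n i (X ω)) -
          (∑ i, (if Tstar ω ∈ C i then (1:ℝ) else 0) * f i (X ω))| ∂Q
          ≤ ∫ ω, ∑ i, |F' n i (X ω) - f i (X ω)| ∂Q :=
            integral_mono (((hAF'int n).sub hAfint).abs)
              (integrable_finset_sum _ fun i _ => hI3 i) hptw
        _ = ∑ i, ∫ ω, |F' n i (X ω) - f i (X ω)| ∂Q :=
            integral_finset_sum _ (fun i _ => hI3 i)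
        _ = b n := by
            refine Finset.sum_congr rfl fun i _ => ?_
            exact (integral_map hX.aemeasurable
              ((hF'm n i).sub (hfm i)).abs.aestronglyMeasurable).symm
    calc ∫ ω, |g ω - ∑ i, (if Tstar ω ∈ C i then (1:ℝ) else 0) * f i (X ω)| ∂Q
        ≤ ∫ ω, (|g ω - ∑ i, (if Tstar ω ∈ C i then (1:ℝ) else 0) * F' n i (X ω)|
          + |(∑ i, (if Tstar ω ∈ C i then (1:ℝ) else 0) * F' n i (X ω)) -
            (∑ i, (if Tstar ω ∈ C i then (1:ℝ) else 0) * f i (X ω))|) ∂Q := by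
          refine integral_mono ((hg.sub hAfint).abs)
            ((hg.sub (hAF'int n)).abs.add (((hAF'int n).sub hAfint).abs)) (fun ω => ?_)
          exact abs_sub_le _ _ _
      _ = (∫ ω, |g ω - ∑ i, (if Tstar ω ∈ C i then (1:ℝ) else 0) * F' n i (X ω)| ∂Q)
          + ∫ ω, |(∑ i, (if Tstar ω ∈ C i then (1:ℝ) else 0) * F' n i (X ω)) -
            (∑ i, (if Tstar ω ∈ C i then (1:ℝ) else 0) * f i (X ω))| ∂Q :=
          integral_add (hg.sub (hAF'int n)).abs (((hAF'int n).sub hAfint).abs)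
      _ ≤ a n + b n := by
          rw [h2]
          exact add_le_add le_rfl h3
  have hle0 : ∫ ω, |g ω - ∑ i, (if Tstar ω ∈ C i then (1:ℝ) else 0) * f i (X ω)| ∂Q ≤ 0 := by
    have hab : Tendsto (fun n => a n + b n) atTop (nhds 0) := by
      have := hconv.add hb
      simpa using this
    exact ge_of_tendsto' hab hmain
  have heq0 : ∫ ω, |g ω - ∑ i, (if Tstar ω ∈ C i then (1:ℝ) else 0) * f i (X ω)| ∂Q = 0 :=
    le_antisymm hle0 (integral_nonneg fun ω => abs_nonneg _)
  have hzero := (integral_eq_zero_iff_of_nonneg_ae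
    (Filter.Eventually.of_forall fun ω => abs_nonneg _) (hg.sub hAfint).abs).mp heq0
  filter_upwards [hzero] with ω hω
  have : |g ω - ∑ i, (if Tstar ω ∈ C i then (1:ℝ) else 0) * f i (X ω)| = 0 := hω
  have h5 := abs_eq_zero.mp this
  linarith
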